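/- Let ι be a finite set of token indices, E a real vector space, and consider a multi-linear model given by initial token embeddings H₀ : ι → E, linear block maps V_t(J, K) : E →ₗ[ℝ] E for t = 1, …, T and J, K ∈ ι, with forward propagation H_t(K) = ∑_{J ∈ ι} V_t(J, K)(H_{t−1}(J)), and a linear output ĝ(L) : E →ₗ[ℝ] ℝ for each L ∈ ι, so that the model output is f = ∑_{L ∈ ι} ĝ(L)(H_T(L)). For a walk W = (I₀, I₁, …, I_T) ∈ ι^{T+1}, define its higher-order relevance R_W = ĝ(I_T)( V_T(I_{T−1}, I_T)( ⋯ V_1(I₀, I₁)(H₀(I₀)) ⋯ ) ). Then the walk relevances are conservative: the sum of R_W over all walks W ∈ ι^{T+1} equals the model output f. -/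

import Mathlib

/-- The value carried along a walk `W` through the multi-linear model: start at
the initial embedding of `W 0` and apply, at each block `t`, the linear map
aggregating token `W t` into token `W (t+1)`. -/
def chainVal {ι : Type*} {E : Type*} [AddCommGroup E] [Module ℝ E]
    (V : ℕ → ι → ι → (E →ₗ[ℝ] E)) (H0 : ι → E) (W : ℕ → ι) : ℕ → E
  | 0 => H0 (W 0)
  | t + 1 => V t (W t) (W (t + 1)) (chainVal V H0 W t)

open Fin.NatCast

lemma chainVal_congr {ι : Type*} {E : Type*} [AddCommGroup E] [Module ℝ E]
    (V : ℕ → ι → ι → (E →ₗ[ℝ] E)) (H0 : ι → E) {W W' : ℕ → ι} :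
    ∀ t : ℕ, (∀ n ≤ t, W n = W' n) → chainVal V H0 W t = chainVal V H0 W' t
  | 0, h => by simp [chainVal, h 0 (le_refl 0)]
  | t + 1, h => by
      simp only [chainVal, h t (Nat.le_succ t), h (t+1) le_rfl,
        chainVal_congr V H0 t (fun n hn => h n (hn.trans (Nat.le_succ t)))]

lemma key_lemma {ι : Type*} [Fintype ι] {E : Type*} [AddCommGroup E] [Module ℝ E]
    (V : ℕ → ι → ι → (E →ₗ[ℝ] E)) (H0 : ι → E) (H : ℕ → ι → E)
    (hH0 : H 0 = H0)
    (hH : ∀ (t : ℕ) (K : ι), H (t + 1) K = ∑ J : ι, V t J K (H t J)) :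
    ∀ (t : ℕ) (g : ι → (E →ₗ[ℝ] ℝ)),
      ∑ W : Fin (t + 1) → ι, g (W (Fin.last t)) (chainVal V H0 (fun n : ℕ => W n) t)
        = ∑ L : ι, g L (H t L) := by
  intro t
  induction t with
  | zero =>
      intro g
      rw [← (Equiv.funUnique (Fin 1) ι).symm.sum_comp]
      simp [chainVal, hH0]
  | succ t ih =>
      intro g
      rw [← ((Fin.snocEquiv (fun _ : Fin (t+2) => ι))).sum_comp]
      rw [Fintype.sum_prod_type]
      have step : ∀ (W : Fin (t+1) → ι) (K : ι),
          g ((Fin.snocEquiv (fun _ : Fin (t+2) => ι) (K, W)) (Fin.last (t+1)))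
            (chainVal V H0 (fun n : ℕ => (Fin.snocEquiv (fun _ : Fin (t+2) => ι) (K, W)) n) (t+1))
          = (g K ∘ₗ V t (W (Fin.last t)) K) (chainVal V H0 (fun n : ℕ => W n) t) := by
        intro W K
        have hlast : ((Fin.snocEquiv (fun _ : Fin (t+2) => ι)) (K, W)) (Fin.last (t+1)) = K := by
          simp [Fin.snocEquiv]
        have hcast : ∀ n : ℕ, n ≤ t →
            ((Fin.snocEquiv (fun _ : Fin (t+2) => ι)) (K, W)) (n : Fin (t+2)) = W (n : Fin (t+1)) := by
          intro n hn
          have h1 : ((n : ℕ) : Fin (t+2)) = Fin.castSucc ((n : ℕ) : Fin (t+1)) := by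
            ext
            simp only [Fin.val_natCast, Fin.coe_castSucc]
            rw [Nat.mod_eq_of_lt (by omega), Nat.mod_eq_of_lt (by omega)]
          rw [h1]
          simp [Fin.snocEquiv]
        have hT : ((t+1 : ℕ) : Fin (t+2)) = Fin.last (t+1) := Fin.natCast_eq_last (t+1)
        have ht' : ((t : ℕ) : Fin (t+2)) = Fin.castSucc (Fin.last t) := by
          ext; simp [Fin.val_natCast, Nat.mod_eq_of_lt (by omega : t < t+2)]
        have harg : ((Fin.snocEquiv (fun _ : Fin (t+2) => ι)) (K, W)) ((t : ℕ) : Fin (t+2))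
            = W (Fin.last t) := by
          rw [ht']; simp [Fin.snocEquiv]
        simp only [chainVal, LinearMap.comp_apply, hT, hlast, harg]
        rw [chainVal_congr V H0 t hcast]
      calc ∑ K : ι, ∑ W : Fin (t+1) → ι,
              g ((Fin.snocEquiv (fun _ : Fin (t+2) => ι) (K, W)) (Fin.last (t+1)))
                (chainVal V H0 (fun n : ℕ => (Fin.snocEquiv (fun _ : Fin (t+2) => ι) (K, W)) n) (t+1))
          = ∑ K : ι, ∑ W : Fin (t+1) → ι,
              (g K ∘ₗ V t (W (Fin.last t)) K) (chainVal V H0 (fun n : ℕ => W n) t) := by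
            refine Finset.sum_congr rfl fun K _ => Finset.sum_congr rfl fun W _ => ?_
            exact step W K
        _ = ∑ K : ι, ∑ L : ι, (g K ∘ₗ V t L K) (H t L) := by
            refine Finset.sum_congr rfl fun K _ => ?_
            exact ih (fun L => g K ∘ₗ V t L K)
        _ = ∑ L : ι, g L (H (t+1) L) := by
            refine Finset.sum_congr rfl fun K _ => ?_
            rw [hH t K, map_sum]
            simp [LinearMap.comp_apply]

/-- In a multi-linear model with forward propagation
`H (t+1) K = ∑ J, V t J K (H t J)` and linear readout
`f = ∑ L, gout L (H T L)`, the higher-order walk relevances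
`R_W = gout (W T) (V_{T-1} ⋯ V_0 (H0 (W 0)))` are conservative:
their sum over all walks `W ∈ ι^{T+1}` equals the model output `f`. -/
theorem walk_relevances_conservative
    {ι : Type*} [Fintype ι] [DecidableEq ι]
    {E : Type*} [AddCommGroup E] [Module ℝ E]
    (T : ℕ)
    (V : ℕ → ι → ι → (E →ₗ[ℝ] E))
    (H0 : ι → E) (gout : ι → (E →ₗ[ℝ] ℝ))
    (H : ℕ → ι → E)
    (hH0 : H 0 = H0)
    (hH : ∀ (t : ℕ) (K : ι), H (t + 1) K = ∑ J : ι, V t J K (H t J))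
    (f : ℝ)
    (hf : f = ∑ L : ι, gout L (H T L)) :
    ∑ W : Fin (T + 1) → ι,
        gout (W (Fin.last T)) (chainVal V H0 (fun n : ℕ => W (Fin.ofNat (T + 1) n)) T)
      = f := by
  rw [hf]
  exact key_lemma V H0 H hH0 hH T gout
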